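/- Let K be a field, r ∈ K with r ≠ 0, h(x) ∈ K[x] nonzero, and f₁,...,fₙ ∈ K[x] distinct polynomials with Σᵢ deg fᵢ > 0 such that fₙ(x) − fᵢ(x) is non-constant for all i = 1,...,n−1. Then F(x,y) = h(x)·∏ᵢ₌₁ⁿ(y − fᵢ(x)) + r is absolutely irreducible. -/
import Mathlib


open Polynomial

/-- Corollary 3.6 b): if `r ≠ 0`, `h ≠ 0`, and `f₁,…,fₙ` are distinct with
`Σ deg fᵢ > 0` and `fₙ - fᵢ` non-constant for all `i < n`, then
`F(x,y) = h(x)·∏(y - fᵢ(x)) + r` is absolutely irreducible.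
Here the polynomials are indexed by `Fin (n + 1)` and `fₙ` is `f (Fin.last n)`. -/
theorem stmt19 {K : Type*} [Field K] (n : ℕ) (h : Polynomial K) (hh : h ≠ 0)
    (r : K) (hr : r ≠ 0)
    (f : Fin (n + 1) → Polynomial K) (hinj : Function.Injective f)
    (hdeg : 0 < ∑ i, (f i).natDegree)
    (hnc : ∀ i : Fin (n + 1), i ≠ Fin.last n → 0 < (f (Fin.last n) - f i).natDegree) :
    Irreducible ((Polynomial.C h * ∏ i, (Polynomial.X - Polynomial.C (f i)) +
        Polynomial.C (Polynomial.C r)).map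
      (Polynomial.mapRingHom (algebraMap K (AlgebraicClosure K)))) := by
  classical
  set L := AlgebraicClosure K
  set σ : K →+* L := algebraMap K L with hσdef
  have hσ : Function.Injective σ := σ.injective
  set g : Fin (n + 1) → Polynomial L := fun i => (f i).map σ with hgdef
  have hginj : Function.Injective g := by
    intro i j hij
    exact hinj (Polynomial.map_injective σ hσ hij)
  set h' : Polynomial L := h.map σ with hh'def
  set r' : L := σ r with hr'def
  have hh' : h' ≠ 0 := by
    simpa [hh'def, Polynomial.map_eq_zero_iff hσ] using hh
  have hr' : r' ≠ 0 := by simpa [hr'def, _root_.map_eq_zero] using hr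
  have hP : ((Polynomial.C h * ∏ i, (Polynomial.X - Polynomial.C (f i)) +
        Polynomial.C (Polynomial.C r)).map (Polynomial.mapRingHom σ))
      = Polynomial.C h' * ∏ i, (Polynomial.X - Polynomial.C (g i)) +
        Polynomial.C (Polynomial.C r') := by
    simp [Polynomial.map_add, Polynomial.map_mul, Polynomial.map_prod, Polynomial.map_sub,
      Polynomial.map_C, Polynomial.map_X, Polynomial.coe_mapRingHom, hgdef, hh'def, hr'def]
  rw [hP]
  set P : Polynomial (Polynomial L) :=
    Polynomial.C h' * ∏ i, (Polynomial.X - Polynomial.C (g i)) +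
      Polynomial.C (Polynomial.C r') with hPdef
  -- degree of the product
  have hprodne : (∏ i : Fin (n + 1), (Polynomial.X - Polynomial.C (g i))) ≠ 0 := by
    apply Finset.prod_ne_zero_iff.mpr
    intro i _
    exact Polynomial.X_sub_C_ne_zero (g i)
  have hproddeg : (∏ i : Fin (n + 1), (Polynomial.X - Polynomial.C (g i))).natDegree = n + 1 := by
    rw [Polynomial.natDegree_prod _ _ (fun i _ => Polynomial.X_sub_C_ne_zero (g i))]
    simp [Polynomial.natDegree_X_sub_C]
  have hPdeg : P.natDegree = n + 1 := by
    rw [hPdef, Polynomial.natDegree_add_C,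
      Polynomial.natDegree_mul (Polynomial.C_ne_zero.mpr hh') hprodne,
      Polynomial.natDegree_C, hproddeg]
    omega
  have hPne : P ≠ 0 := fun e => by simp [e] at hPdeg
  have heval : ∀ i, P.eval (g i) = Polynomial.C r' := by
    intro i
    rw [hPdef]
    rw [Polynomial.eval_add, Polynomial.eval_mul, Polynomial.eval_C, Polynomial.eval_C,
      Polynomial.eval_prod]
    rw [Finset.prod_eq_zero (Finset.mem_univ i) (by simp)]
    ring
  have hCr'unit : IsUnit (Polynomial.C r' : Polynomial L) :=
    Polynomial.isUnit_C.mpr hr'.isUnit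
  constructor
  · exact Polynomial.not_isUnit_of_natDegree_pos P (by omega)
  · intro A B hAB
    have hA0 : A ≠ 0 := fun e => hPne (by rw [hAB, e, zero_mul])
    have hB0 : B ≠ 0 := fun e => hPne (by rw [hAB, e, mul_zero])
    have hab : A.natDegree + B.natDegree = n + 1 := by
      rw [← Polynomial.natDegree_mul hA0 hB0, ← hAB, hPdeg]
    have hevalAB : ∀ i, A.eval (g i) * B.eval (g i) = Polynomial.C r' := by
      intro i
      rw [← Polynomial.eval_mul, ← hAB, heval i]
    by_cases hA : A.natDegree = 0
    · left
      obtain ⟨u, hu⟩ := Polynomial.natDegree_eq_zero.mp hA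
      have hunit : IsUnit u := by
        have := hevalAB (Fin.last n)
        rw [← hu, Polynomial.eval_C] at this
        exact isUnit_of_mul_isUnit_left (this ▸ hCr'unit)
      exact hu ▸ Polynomial.isUnit_C.mpr hunit
    by_cases hB : B.natDegree = 0
    · right
      obtain ⟨u, hu⟩ := Polynomial.natDegree_eq_zero.mp hB
      have hunit : IsUnit u := by
        have := hevalAB (Fin.last n)
        rw [← hu, Polynomial.eval_C] at this
        exact isUnit_of_mul_isUnit_right (this ▸ hCr'unit)
      exact hu ▸ Polynomial.isUnit_C.mpr hunit
    · exfalso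
      -- each A.eval (g i) is a unit, hence a constant
      have hAunit : ∀ i, IsUnit (A.eval (g i)) := by
        intro i
        exact isUnit_of_mul_isUnit_left ((hevalAB i) ▸ hCr'unit)
      set c : Fin (n + 1) → L := fun i => (A.eval (g i)).coeff 0 with hcdef
      have hc : ∀ i, A.eval (g i) = Polynomial.C (c i) := fun i =>
        Polynomial.eq_C_of_natDegree_eq_zero
          (Polynomial.natDegree_eq_zero_of_isUnit (hAunit i))
      -- all the constants are equal
      have hceq : ∀ i, c i = c (Fin.last n) := by
        intro i
        by_cases hi : i = Fin.last n
        · rw [hi]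
        · have hdvd : (g i - g (Fin.last n)) ∣
              (A.eval (g i) - A.eval (g (Fin.last n))) :=
            Polynomial.sub_dvd_eval_sub (g i) (g (Fin.last n)) A
        
          rw [hc i, hc (Fin.last n), ← Polynomial.C_sub] at hdvd
          have hgpos : 0 < (g i - g (Fin.last n)).natDegree := by
            have : g i - g (Fin.last n) = -((f (Fin.last n) - f i).map σ) := by
              simp [hgdef, Polynomial.map_sub]
            rw [this, Polynomial.natDegree_neg,
              Polynomial.natDegree_map_eq_of_injective hσ]
            exact hnc i hi
          by_contra hne
          have hCne : (Polynomial.C (c i - c (Fin.last n)) : Polynomial L) ≠ 0 := by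
            simpa [sub_eq_zero] using hne
          have := Polynomial.natDegree_le_of_dvd hdvd hCne
          rw [Polynomial.natDegree_C] at this
          omega
      set Q : Polynomial (Polynomial L) :=
        A - Polynomial.C (Polynomial.C (c (Fin.last n))) with hQdef
      have hQeval : ∀ i, Q.eval (g i) = 0 := by
        intro i
        rw [hQdef, Polynomial.eval_sub, Polynomial.eval_C, hc i, hceq i, sub_self]
      have hQdeg : Q.natDegree = A.natDegree := Polynomial.natDegree_sub_C
      have hQzero : Q = 0 := by
        apply Polynomial.eq_zero_of_natDegree_lt_card_of_eval_eq_zero Q hginj hQeval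
        rw [hQdeg, Fintype.card_fin]
        omega
      rw [hQzero] at hQdeg
      simp at hQdeg
      omega
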